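/- In the sparse regime, the extremes test is asymptotically powerless below its own boundary: if ε_n = n^{-β} with β ∈ (0,1) fixed and ρ_n = 1 − n^{-γ} with γ > 0 fixed such that γ < 2β, then for every sequence of thresholds (t_n), the sum of the type I and type II error probabilities of the test rejecting when min_{1≤i≤n} |U_i| ≤ t_n, where U_i := (X_i − Y_i)/√2, has liminf at least 1. -/

import Mathlib

open MeasureTheory ProbabilityTheory Real Filter Topology Set
open scoped NNReal ENNReal

noncomputable section
set_option maxHeartbeats 1000000

/-- The standard normal distribution on ℝ. -/
def stdGauss : Measure ℝ := gaussianReal 0 1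

/-- Two independent standard normals. -/
def stdGauss2 : Measure (ℝ × ℝ) := stdGauss.prod stdGauss

/-- `N(0, Σ_ρ)`: the centered bivariate normal with unit marginal variances and
correlation `ρ`, i.e. the law of `(Z₁, ρ Z₁ + √(1-ρ²) Z₂)` for independent standard
normal `Z₁, Z₂`. -/
def biNormal (ρ : ℝ) : Measure (ℝ × ℝ) :=
  stdGauss2.map fun z => (z.1, ρ * z.1 + Real.sqrt (1 - ρ ^ 2) * z.2)

/-- The contamination mixture `P_{ε,ρ} = (1-ε) N(0,Σ₀) + ε N(0,Σ_ρ)`. -/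
def mixture (ε ρ : ℝ) : Measure (ℝ × ℝ) :=
  ENNReal.ofReal (1 - ε) • biNormal 0 + ENNReal.ofReal ε • biNormal ρ

/-- The `n`-fold product (i.i.d.) measure. -/
def iid (n : ℕ) (μ : Measure (ℝ × ℝ)) : Measure (Fin n → ℝ × ℝ) :=
  Measure.pi fun _ => μ
/-- The pairwise differences `Uᵢ = (Xᵢ - Yᵢ)/√2`. -/
def pairDiff (n : ℕ) (x : Fin n → ℝ × ℝ) (i : Fin n) : ℝ :=
  ((x i).1 - (x i).2) / Real.sqrt 2

/-- The rejection region of the extremes test: `min_{1 ≤ i ≤ n} |Uᵢ| ≤ t`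
(equivalently, some `|Uᵢ| ≤ t`). -/
def extremesReject (n : ℕ) (t : ℝ) : Set (Fin n → ℝ × ℝ) :=
  {x | ∃ i : Fin n, |pairDiff n x i| ≤ t}

/-! ### Auxiliary lemmas -/

instance : IsProbabilityMeasure stdGauss := by unfold stdGauss; infer_instance
instance : IsProbabilityMeasure stdGauss2 := by unfold stdGauss2; infer_instance

lemma sqrt_two_pi_lb : (2:ℝ) ≤ Real.sqrt (2 * π) := by
  nlinarith [Real.sq_sqrt (by positivity : (0:ℝ) ≤ 2*π), Real.sqrt_nonneg (2*π),
    Real.pi_gt_three]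

lemma sqrt_two_pi_ub : Real.sqrt (2 * π) ≤ 2.6 := by
  rw [show (2.6:ℝ) = Real.sqrt (2.6^2) by rw [Real.sqrt_sq]; norm_num]
  apply Real.sqrt_le_sqrt; nlinarith [Real.pi_lt_d2]

lemma gauss_pdf_eq (x : ℝ) :
    gaussianPDFReal 0 1 x = (Real.sqrt (2 * π))⁻¹ * Real.exp (-(x^2/2)) := by
  rw [gaussianPDFReal]
  norm_num
  left
  ring_nf

lemma gauss_pdf_le (x : ℝ) : gaussianPDFReal 0 1 x ≤ 1/2 := by
  rw [gauss_pdf_eq]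
  have h2 : Real.exp (-(x^2/2)) ≤ 1 := by
    rw [Real.exp_le_one_iff]; nlinarith [sq_nonneg x]
  have h3 : (Real.sqrt (2 * π))⁻¹ ≤ 1/2 := by
    rw [inv_le_comm₀ (by linarith [sqrt_two_pi_lb]) (by norm_num)]
    linarith [sqrt_two_pi_lb]
  calc (Real.sqrt (2*π))⁻¹ * Real.exp (-(x^2/2)) ≤ (Real.sqrt (2*π))⁻¹ * 1 :=
        mul_le_mul_of_nonneg_left h2 (by positivity)
    _ ≤ 1/2 := by rw [mul_one]; exact h3

lemma gauss_pdf_ge (x : ℝ) (hx : |x| ≤ 2) : (1:ℝ)/21 ≤ gaussianPDFReal 0 1 x := by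
  rw [gauss_pdf_eq]
  have h2 : Real.exp (-2) ≤ Real.exp (-(x^2/2)) := by
    apply Real.exp_le_exp.mpr
    nlinarith [sq_abs x, abs_nonneg x]
  have he : (1:ℝ)/8 ≤ Real.exp (-2) := by
    rw [Real.exp_neg, one_div]
    rw [inv_le_inv₀ (by norm_num : (0:ℝ) < 8) (Real.exp_pos 2)]
    calc Real.exp 2 = Real.exp 1 * Real.exp 1 := by rw [← Real.exp_add]; norm_num
      _ ≤ 2.7182818286 * 2.7182818286 := by
          nlinarith [Real.exp_one_lt_d9, Real.exp_pos 1]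
      _ ≤ 8 := by norm_num
  have h3 : (2.6:ℝ)⁻¹ ≤ (Real.sqrt (2 * π))⁻¹ := by
    apply inv_anti₀ (by linarith [sqrt_two_pi_lb]) sqrt_two_pi_ub
  calc (1:ℝ)/21 ≤ (2.6)⁻¹ * (1/8) := by norm_num
    _ ≤ (Real.sqrt (2*π))⁻¹ * Real.exp (-(x^2/2)) := by
        apply mul_le_mul h3 (by linarith) (by norm_num) (by positivity)

lemma stdGauss_eq : stdGauss = volume.withDensity (gaussianPDF 0 1) := by
  unfold stdGauss
  rw [gaussianReal_of_var_ne_zero 0 one_ne_zero]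

lemma stdGauss_set_le {s : Set ℝ} (hs : MeasurableSet s) :
    stdGauss s ≤ ENNReal.ofReal (1/2) * volume s := by
  rw [stdGauss_eq, withDensity_apply _ hs]
  calc ∫⁻ x in s, gaussianPDF 0 1 x ∂volume
      ≤ ∫⁻ _ in s, ENNReal.ofReal (1/2) ∂volume := by
        apply setLIntegral_mono' hs
        intro x _
        exact ENNReal.ofReal_le_ofReal (gauss_pdf_le x)
    _ = ENNReal.ofReal (1/2) * volume s := by
        rw [setLIntegral_const]

lemma stdGauss_closedBall_le (c r : ℝ) :
    stdGauss (Metric.closedBall c r) ≤ ENNReal.ofReal r := by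
  calc stdGauss (Metric.closedBall c r)
      ≤ ENNReal.ofReal (1/2) * volume (Metric.closedBall c r) :=
        stdGauss_set_le measurableSet_closedBall
    _ ≤ ENNReal.ofReal (1/2) * ENNReal.ofReal (2*r) := by
        gcongr
        rw [Real.volume_closedBall]
    _ = ENNReal.ofReal r := by
        rw [← ENNReal.ofReal_mul (by norm_num)]
        by_cases hr : 0 ≤ r
        · rw [show (1:ℝ)/2*(2*r) = r by ring]
        · push_neg at hr
          rw [ENNReal.ofReal_eq_zero.mpr (by linarith), ENNReal.ofReal_eq_zero.mpr (by linarith)]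

lemma stdGauss_Icc_ge {u v : ℝ} (h2 : -2 ≤ u) (h3 : v ≤ 2) :
    ENNReal.ofReal ((v - u)/21) ≤ stdGauss (Icc u v) := by
  rw [stdGauss_eq, withDensity_apply _ measurableSet_Icc]
  calc ENNReal.ofReal ((v - u)/21)
      = ENNReal.ofReal (1/21) * volume (Icc u v) := by
        rw [Real.volume_Icc, ← ENNReal.ofReal_mul (by norm_num)]
        ring_nf
    _ = ∫⁻ _ in Icc u v, ENNReal.ofReal (1/21) ∂volume := by rw [setLIntegral_const]
    _ ≤ ∫⁻ x in Icc u v, gaussianPDF 0 1 x ∂volume := by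
        apply setLIntegral_mono' measurableSet_Icc
        intro x hx
        apply ENNReal.ofReal_le_ofReal
        apply gauss_pdf_ge
        rw [abs_le]
        exact ⟨by linarith [hx.1], by linarith [hx.2]⟩

/-- Slice upper bound: `P(|a Z₁ + b Z₂| ≤ t) ≤ t/|b|`. -/
lemma slice_upper (a b t : ℝ) (hb : b ≠ 0) :
    stdGauss2 {z : ℝ × ℝ | |a * z.1 + b * z.2| ≤ t} ≤ ENNReal.ofReal (t / |b|) := by
  have hS : MeasurableSet {z : ℝ × ℝ | |a * z.1 + b * z.2| ≤ t} := by
    apply measurableSet_le _ measurable_const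
    fun_prop
  rw [stdGauss2, Measure.prod_apply hS]
  have key : ∀ x : ℝ, stdGauss (Prod.mk x ⁻¹' {z : ℝ × ℝ | |a * z.1 + b * z.2| ≤ t})
      ≤ ENNReal.ofReal (t / |b|) := by
    intro x
    have hsub : Prod.mk x ⁻¹' {z : ℝ × ℝ | |a * z.1 + b * z.2| ≤ t}
        ⊆ Metric.closedBall (-(a*x)/b) (t/|b|) := by
      intro y hy
      simp only [mem_preimage, mem_setOf_eq] at hy
      rw [Metric.mem_closedBall, Real.dist_eq]
      rw [show y - -(a*x)/b = (a*x + b*y)/b by field_simp; ring]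
      rw [abs_div]
      exact div_le_div_of_nonneg_right hy (abs_pos.mpr hb).le
    calc stdGauss _ ≤ stdGauss (Metric.closedBall (-(a*x)/b) (t/|b|)) := measure_mono hsub
      _ ≤ ENNReal.ofReal (t/|b|) := stdGauss_closedBall_le _ _
  calc ∫⁻ x, stdGauss (Prod.mk x ⁻¹' _) ∂stdGauss
      ≤ ∫⁻ _, ENNReal.ofReal (t / |b|) ∂stdGauss := lintegral_mono key
    _ = ENNReal.ofReal (t / |b|) := by simp

/-- Strip lower bound: `P(|Z₁ - Z₂| ≤ s) ≥ s/500` for `0 ≤ s ≤ 1`. -/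
lemma strip_lower (s : ℝ) (hs0 : 0 ≤ s) (hs1 : s ≤ 1) :
    ENNReal.ofReal (s/500) ≤ stdGauss2 {z : ℝ × ℝ | |z.1 - z.2| ≤ s} := by
  have hS : MeasurableSet {z : ℝ × ℝ | |z.1 - z.2| ≤ s} := by
    apply measurableSet_le _ measurable_const
    fun_prop
  rw [stdGauss2, Measure.prod_apply hS]
  have key : ∀ x ∈ Icc (-1:ℝ) 1, ENNReal.ofReal (s/21)
      ≤ stdGauss (Prod.mk x ⁻¹' {z : ℝ × ℝ | |z.1 - z.2| ≤ s}) := by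
    intro x hx
    have hsub : Icc x (x + s) ⊆ Prod.mk x ⁻¹' {z : ℝ × ℝ | |z.1 - z.2| ≤ s} := by
      intro y hy
      simp only [mem_preimage, mem_setOf_eq]
      rw [abs_le]
      constructor <;> [linarith [hy.2]; linarith [hy.1]]
    calc ENNReal.ofReal (s/21) = ENNReal.ofReal ((x + s - x)/21) := by ring_nf
      _ ≤ stdGauss (Icc x (x + s)) := by
          apply stdGauss_Icc_ge
          · linarith [hx.1]
          · linarith [hx.2]
      _ ≤ _ := measure_mono hsub
  calc ENNReal.ofReal (s/500)
      ≤ ENNReal.ofReal (s/21) * stdGauss (Icc (-1) 1) := by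
        have h1 : ENNReal.ofReal ((1 - (-1))/21) ≤ stdGauss (Icc (-1) 1) :=
          stdGauss_Icc_ge (by norm_num) (by norm_num)
        calc ENNReal.ofReal (s/500) ≤ ENNReal.ofReal (s/21) * ENNReal.ofReal ((1-(-1))/21) := by
              rw [← ENNReal.ofReal_mul (by positivity)]
              apply ENNReal.ofReal_le_ofReal
              rw [show (1:ℝ)-(-1) = 2 by norm_num]
              nlinarith
          _ ≤ _ := by gcongr
    _ = ∫⁻ _ in Icc (-1:ℝ) 1, ENNReal.ofReal (s/21) ∂stdGauss := by
        rw [setLIntegral_const]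
    _ ≤ ∫⁻ x in Icc (-1:ℝ) 1, stdGauss (Prod.mk x ⁻¹' {z : ℝ × ℝ | |z.1 - z.2| ≤ s}) ∂stdGauss := by
        apply setLIntegral_mono' measurableSet_Icc key
    _ ≤ ∫⁻ x, stdGauss (Prod.mk x ⁻¹' {z : ℝ × ℝ | |z.1 - z.2| ≤ s}) ∂stdGauss :=
        setLIntegral_le_lintegral _ _

lemma gmeas (ρ : ℝ) :
    Measurable (fun z : ℝ × ℝ => (z.1, ρ * z.1 + Real.sqrt (1 - ρ ^ 2) * z.2)) := by
  fun_prop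

instance (ρ : ℝ) : IsProbabilityMeasure (biNormal ρ) :=
  Measure.isProbabilityMeasure_map (gmeas ρ).aemeasurable

lemma mixture_prob {ε : ℝ} (ρ : ℝ) (h0 : 0 ≤ ε) (h1 : ε ≤ 1) :
    IsProbabilityMeasure (mixture ε ρ) := by
  constructor
  rw [mixture]
  simp only [Measure.add_apply, Measure.smul_apply, smul_eq_mul]
  rw [measure_univ, measure_univ, mul_one, mul_one,
    ← ENNReal.ofReal_add (by linarith) h0]
  norm_num

/-- the single-pair acceptance set -/
def Aset (t : ℝ) : Set (ℝ × ℝ) := {p : ℝ × ℝ | |(p.1 - p.2) / Real.sqrt 2| ≤ t}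

lemma Aset_meas (t : ℝ) : MeasurableSet (Aset t) := by
  apply measurableSet_le _ measurable_const
  fun_prop

lemma reject_meas (n : ℕ) (t : ℝ) : MeasurableSet (extremesReject n t) := by
  have : extremesReject n t = ⋃ i : Fin n, (fun x => x i) ⁻¹' (Aset t) := by
    ext x; simp [extremesReject, Aset, pairDiff]
  rw [this]
  exact MeasurableSet.iUnion fun i => (measurable_pi_apply i) (Aset_meas t)

lemma reject_compl (n : ℕ) (t : ℝ) :
    (extremesReject n t)ᶜ = Set.pi Set.univ (fun _ : Fin n => (Aset t)ᶜ) := by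
  ext x
  simp [extremesReject, Aset, pairDiff, Set.pi]

lemma iid_compl (n : ℕ) (t : ℝ) (μ : Measure (ℝ × ℝ)) [SigmaFinite μ] :
    (iid n μ) (extremesReject n t)ᶜ = (μ (Aset t)ᶜ) ^ n := by
  rw [reject_compl, iid, Measure.pi_pi]
  simp

lemma preimage_Aset (ρ t : ℝ) :
    (fun z : ℝ × ℝ => (z.1, ρ * z.1 + Real.sqrt (1 - ρ ^ 2) * z.2)) ⁻¹' (Aset t)
      = {z : ℝ × ℝ |
          |((1-ρ)/Real.sqrt 2) * z.1 + (-(Real.sqrt (1 - ρ^2))/Real.sqrt 2) * z.2| ≤ t} := by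
  ext z
  simp only [mem_preimage, Aset, mem_setOf_eq]
  rw [show (z.1 - (ρ * z.1 + Real.sqrt (1 - ρ ^ 2) * z.2)) / Real.sqrt 2
      = ((1-ρ)/Real.sqrt 2) * z.1 + (-(Real.sqrt (1 - ρ^2))/Real.sqrt 2) * z.2 by ring]

lemma biNormal_Aset (ρ t : ℝ) :
    biNormal ρ (Aset t) = stdGauss2
      {z : ℝ × ℝ |
        |((1-ρ)/Real.sqrt 2) * z.1 + (-(Real.sqrt (1 - ρ^2))/Real.sqrt 2) * z.2| ≤ t} := by
  rw [biNormal, Measure.map_apply (gmeas ρ) (Aset_meas t), preimage_Aset]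

lemma biNormal_zero_Aset (t : ℝ) :
    biNormal 0 (Aset t) = stdGauss2 {z : ℝ × ℝ | |z.1 - z.2| ≤ Real.sqrt 2 * t} := by
  rw [biNormal_Aset]
  congr 1
  ext z
  simp only [mem_setOf_eq]
  have h2 : (0:ℝ) < Real.sqrt 2 := by positivity
  rw [show (1-(0:ℝ))/Real.sqrt 2 * z.1 + -Real.sqrt (1 - 0^2)/Real.sqrt 2 * z.2
    = (z.1 - z.2)/Real.sqrt 2 by norm_num; ring]
  rw [abs_div, abs_of_pos h2, div_le_iff₀ h2]
  constructor <;> intro h <;> linarith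

lemma prob_toReal_compl {α : Type*} [MeasurableSpace α] (μ : Measure α)
    [IsProbabilityMeasure μ] {s : Set α} (hs : MeasurableSet s) :
    (μ s).toReal = 1 - (μ sᶜ).toReal := by
  have h := measure_add_measure_compl (μ := μ) hs
  have := ENNReal.toReal_add (measure_ne_top μ s) (measure_ne_top μ sᶜ)
  rw [h] at this
  simp only [measure_univ, ENNReal.toReal_one] at this
  linarith

lemma prob_toReal_le_one {α : Type*} [MeasurableSpace α] (μ : Measure α)
    [IsProbabilityMeasure μ] (s : Set α) : (μ s).toReal ≤ 1 := by
  have h : μ s ≤ 1 := prob_le_one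
  have := ENNReal.toReal_mono ENNReal.one_ne_top h
  simpa using this

lemma pow_sub_pow_le_n_mul {x y : ℝ} (n : ℕ) (hy : 0 ≤ y) (hyx : y ≤ x) (hx : x ≤ 1) :
    x ^ n - y ^ n ≤ n * (x - y) := by
  induction n with
  | zero => simp
  | succ m ih =>
    have hxn : x ^ m ≤ 1 := pow_le_one₀ (le_trans hy hyx) hx
    have hyn : y ^ m ≤ x ^ m := pow_le_pow_left₀ hy hyx m
    have h0 : (0:ℝ) ≤ y ^ m := pow_nonneg hy m
    rw [show x ^ (m+1) - y ^ (m+1) = x * (x ^ m - y ^ m) + (x - y) * y ^ m by ring]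
    push_cast
    have h1 : x * (x ^ m - y ^ m) ≤ x ^ m - y ^ m := by nlinarith
    have h2 : (x - y) * y ^ m ≤ (x - y) := by nlinarith
    nlinarith

lemma one_sub_pow_le_exp {q : ℝ} (n : ℕ) (hq1 : q ≤ 1) :
    (1 - q) ^ n ≤ Real.exp (-(n * q)) := by
  have h : (1 - q) ≤ Real.exp (-q) := by
    linarith [Real.add_one_le_exp (-q)]
  calc (1 - q)^n ≤ (Real.exp (-q))^n := pow_le_pow_left₀ (by linarith) h n
    _ = Real.exp (-(n*q)) := by rw [← Real.exp_nat_mul]; ring_nf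

/-! ### Main theorem -/

/-- in the sparse regime with `γ < 2β`, the extremes test is asymptotically
powerless for any choice of thresholds `(tₙ)`. -/
theorem extremes_powerless (β γ : ℝ) (hβ0 : 0 < β) (hβ1 : β < 1) (hγ0 : 0 < γ)
    (hγ : γ < 2 * β)
    (ε ρ : ℕ → ℝ) (hε : ∀ n : ℕ, ε n = (n : ℝ) ^ (-β))
    (hρ : ∀ n : ℕ, ρ n = 1 - (n : ℝ) ^ (-γ)) :
    ∀ t : ℕ → ℝ,
      1 ≤ Filter.liminf (fun n =>
        ((iid n (biNormal 0)) (extremesReject n (t n))).toReal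
          + (1 - ((iid n (mixture (ε n) (ρ n))) (extremesReject n (t n))).toReal)) atTop := by
  intro t
  set f : ℕ → ℝ := fun n =>
    ((iid n (biNormal 0)) (extremesReject n (t n))).toReal
      + (1 - ((iid n (mixture (ε n) (ρ n))) (extremesReject n (t n))).toReal) with hf
  -- exponents
  set δ : ℝ := β - γ/2 with hδdef
  have hδ : 0 < δ := by rw [hδdef]; linarith
  have hδ1 : δ < 1 := by rw [hδdef]; linarith
  set r : ℝ := 1 - δ/2 with hrdef
  have hr0 : 0 < r := by rw [hrdef]; linarith
  have hr1 : r < 1 := by rw [hrdef]; linarith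
  -- the error bound sequence
  set D : ℕ → ℝ := fun n =>
    Real.sqrt 2 * (n:ℝ)^(-(δ/2)) + Real.exp (-((n:ℝ)^(δ/2)/500)) with hD
  -- D tends to 0
  have hDlim : Tendsto D atTop (𝓝 0) := by
    have h1 : Tendsto (fun n : ℕ => (n:ℝ)^(-(δ/2))) atTop (𝓝 0) :=
      (tendsto_rpow_neg_atTop (by linarith)).comp tendsto_natCast_atTop_atTop
    have h2 : Tendsto (fun n : ℕ => (n:ℝ)^(δ/2)/500) atTop atTop :=
      ((tendsto_rpow_atTop (by linarith)).comp tendsto_natCast_atTop_atTop).atTop_div_const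
        (by norm_num)
    have h3 : Tendsto (fun n : ℕ => Real.exp (-((n:ℝ)^(δ/2)/500))) atTop (𝓝 0) :=
      Real.tendsto_exp_atBot.comp (tendsto_neg_atTop_atBot.comp h2)
    have := (h1.const_mul (Real.sqrt 2)).add h3
    simpa [hD] using this
  -- D is nonnegative
  have hDpos : ∀ n, 0 ≤ D n := by
    intro n
    have : (0:ℝ) ≤ Real.sqrt 2 * (n:ℝ)^(-(δ/2)) := by positivity
    have := Real.exp_pos (-((n:ℝ)^(δ/2)/500))
    simp only [hD]
    positivity
  -- the main pointwise bound
  have main : ∀ n : ℕ, 2 ≤ n → 1 - D n ≤ f n := by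
    intro n hn
    have hN1 : (1:ℝ) < (n:ℝ) := by
      have : (2:ℝ) ≤ (n:ℝ) := by exact_mod_cast hn
      linarith
    have hN0 : (0:ℝ) < (n:ℝ) := by linarith
    have hεn : ε n = (n:ℝ)^(-β) := hε n
    have hε0 : 0 < ε n := by rw [hεn]; positivity
    have hε1 : ε n ≤ 1 := by
      rw [hεn]; exact Real.rpow_le_one_of_one_le_of_nonpos hN1.le (by linarith)
    have hv : 1 - ρ n = (n:ℝ)^(-γ) := by rw [hρ n]; ring
    have hv0 : (0:ℝ) < (n:ℝ)^(-γ) := by positivity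
    have hv1 : (n:ℝ)^(-γ) < 1 := Real.rpow_lt_one_of_one_lt_of_neg hN1 (by linarith)
    have hρ0 : 0 < ρ n := by rw [hρ n]; linarith
    have hρ1 : ρ n < 1 := by rw [hρ n]; linarith
    haveI hmix : IsProbabilityMeasure (mixture (ε n) (ρ n)) := mixture_prob _ hε0.le hε1
    haveI : IsProbabilityMeasure (iid n (biNormal 0)) := by rw [iid]; infer_instance
    haveI : IsProbabilityMeasure (iid n (mixture (ε n) (ρ n))) := by rw [iid]; infer_instance
    by_cases htneg : t n < 0
    · have hempty : extremesReject n (t n) = ∅ := by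
        ext x
        simp only [extremesReject, mem_setOf_eq, mem_empty_iff_false, iff_false]
        push_neg
        intro i
        linarith [abs_nonneg (pairDiff n x i)]
      have : f n = 1 := by simp [hf, hempty]
      rw [this]
      linarith [hDpos n]
    · push_neg at htneg
      set q0 : ℝ := ((biNormal 0) (Aset (t n))).toReal with hq0def
      set p1 : ℝ := ((biNormal (ρ n)) (Aset (t n))).toReal with hp1def
      set P0c : ℝ := ((biNormal 0) (Aset (t n))ᶜ).toReal with hP0def
      set P1c : ℝ := ((biNormal (ρ n)) (Aset (t n))ᶜ).toReal with hP1def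
      set Pmc : ℝ := ((mixture (ε n) (ρ n)) (Aset (t n))ᶜ).toReal with hPmdef
      have hq0c : q0 = 1 - P0c := prob_toReal_compl _ (Aset_meas _)
      have hp1c : p1 = 1 - P1c := prob_toReal_compl _ (Aset_meas _)
      have hPm : Pmc = (1 - ε n) * P0c + ε n * P1c := by
        rw [hPmdef, mixture]
        simp only [Measure.add_apply, Measure.smul_apply, smul_eq_mul]
        rw [ENNReal.toReal_add
            (ENNReal.mul_ne_top ENNReal.ofReal_ne_top (measure_ne_top _ _))
            (ENNReal.mul_ne_top ENNReal.ofReal_ne_top (measure_ne_top _ _)),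
          ENNReal.toReal_mul, ENNReal.toReal_mul,
          ENNReal.toReal_ofReal (by linarith : (0:ℝ) ≤ 1 - ε n),
          ENNReal.toReal_ofReal hε0.le]
      have hP0c0 : 0 ≤ P0c := ENNReal.toReal_nonneg
      have hP0c1 : P0c ≤ 1 := prob_toReal_le_one _ _
      have hPmc0 : 0 ≤ Pmc := ENNReal.toReal_nonneg
      have hq00 : 0 ≤ q0 := ENNReal.toReal_nonneg
      have hq01 : q0 ≤ 1 := prob_toReal_le_one _ _
      have hp10 : 0 ≤ p1 := ENNReal.toReal_nonneg
      have hf_eq : f n = 1 - (P0c^n - Pmc^n) := by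
        have e1 : ((iid n (biNormal 0)) (extremesReject n (t n))).toReal = 1 - P0c^n := by
          rw [prob_toReal_compl _ (reject_meas n (t n)), iid_compl, ENNReal.toReal_pow, hP0def]
        have e2 : ((iid n (mixture (ε n) (ρ n))) (extremesReject n (t n))).toReal
            = 1 - Pmc^n := by
          rw [prob_toReal_compl _ (reject_meas n (t n)), iid_compl, ENNReal.toReal_pow, hPmdef]
        rw [hf]
        simp only
        rw [e1, e2]
        ring
      have hbr1 : P0c^n - Pmc^n ≤ (n:ℝ) * (ε n * p1) := by
        have hdiff : P0c - Pmc = ε n * (p1 - q0) := by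
          rw [hPm]
          have h1 : P0c = 1 - q0 := by linarith
          have h2 : P1c = 1 - p1 := by linarith
          rw [h1, h2]
          ring
        rcases le_or_gt Pmc P0c with hle | hlt
        · calc P0c^n - Pmc^n ≤ (n:ℝ) * (P0c - Pmc) := pow_sub_pow_le_n_mul n hPmc0 hle hP0c1
            _ = (n:ℝ) * (ε n * (p1 - q0)) := by rw [hdiff]
            _ ≤ (n:ℝ) * (ε n * p1) := by
                apply mul_le_mul_of_nonneg_left _ hN0.le
                apply mul_le_mul_of_nonneg_left _ hε0.le
                linarith
        · have hle2 : P0c^n ≤ Pmc^n := pow_le_pow_left₀ hP0c0 hlt.le n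
          have hge : (0:ℝ) ≤ (n:ℝ) * (ε n * p1) := by positivity
          linarith
      have hbr2 : P0c^n - Pmc^n ≤ Real.exp (-((n:ℝ) * q0)) := by
        have h1 : P0c^n ≤ Real.exp (-((n:ℝ)*q0)) := by
          have he : P0c = 1 - q0 := by linarith
          rw [he]
          exact one_sub_pow_le_exp n hq01
        have h2 : 0 ≤ Pmc^n := pow_nonneg hPmc0 n
        linarith
      have hsqv : Real.sqrt ((n:ℝ)^(-γ)) = (n:ℝ)^(-(γ/2)) := by
        rw [Real.sqrt_eq_rpow, ← Real.rpow_mul hN0.le]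
        congr 1
        ring
      rcases le_or_gt (t n) ((n:ℝ)^(-r)) with hcase | hcase
      · -- small threshold: use the slice bound
        have hbne : -(Real.sqrt (1 - (ρ n)^2))/Real.sqrt 2 ≠ 0 := by
          have h1 : (0:ℝ) < 1 - (ρ n)^2 := by
            have := pow_lt_one₀ hρ0.le hρ1 (two_ne_zero)
            linarith
          have h2 : (0:ℝ) < Real.sqrt (1 - (ρ n)^2) := Real.sqrt_pos.mpr h1
          have h3 : (0:ℝ) < Real.sqrt 2 := by positivity
          intro hc
          rw [div_eq_zero_iff] at hc
          rcases hc with hc | hc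
          · linarith
          · linarith
        have hp1up : p1 ≤ Real.sqrt 2 * (t n) * (n:ℝ)^(γ/2) := by
          have hb := slice_upper ((1 - ρ n)/Real.sqrt 2)
            (-(Real.sqrt (1 - (ρ n)^2))/Real.sqrt 2) (t n) hbne
          have habs : |(-(Real.sqrt (1 - (ρ n)^2))/Real.sqrt 2)|
              = Real.sqrt (1 - (ρ n)^2) / Real.sqrt 2 := by
            rw [abs_div, abs_neg, abs_of_nonneg (Real.sqrt_nonneg _),
              abs_of_pos (by positivity : (0:ℝ) < Real.sqrt 2)]
          have hstep : p1 ≤ t n / (Real.sqrt (1 - (ρ n)^2) / Real.sqrt 2) := by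
            rw [hp1def, biNormal_Aset]
            apply ENNReal.toReal_le_of_le_ofReal
            · apply div_nonneg htneg
              positivity
            · rw [← habs]
              exact hb
          have hsle : Real.sqrt ((n:ℝ)^(-γ)) ≤ Real.sqrt (1 - (ρ n)^2) := by
            apply Real.sqrt_le_sqrt
            nlinarith
          have hfin : t n / (Real.sqrt (1 - (ρ n)^2) / Real.sqrt 2)
              ≤ Real.sqrt 2 * (t n) * (n:ℝ)^(γ/2) := by
            have hs0 : (0:ℝ) < Real.sqrt ((n:ℝ)^(-γ)) := Real.sqrt_pos.mpr hv0
            have h2 : (0:ℝ) < Real.sqrt 2 := by positivity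
            calc t n / (Real.sqrt (1 - (ρ n)^2) / Real.sqrt 2)
                ≤ t n / (Real.sqrt ((n:ℝ)^(-γ)) / Real.sqrt 2) := by
                  have hd : Real.sqrt ((n:ℝ)^(-γ))/Real.sqrt 2
                      ≤ Real.sqrt (1-(ρ n)^2)/Real.sqrt 2 := by gcongr
                  exact div_le_div_of_nonneg_left htneg (by positivity) hd
              _ = Real.sqrt 2 * (t n) / (n:ℝ)^(-(γ/2)) := by
                  rw [hsqv]
                  field_simp
              _ = Real.sqrt 2 * (t n) * (n:ℝ)^(γ/2) := by
                  rw [Real.rpow_neg hN0.le, div_inv_eq_mul]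
          linarith
        have halg : (n:ℝ) * (n:ℝ)^(-β) * (n:ℝ)^(γ/2) * 
            (n:ℝ)^(-r) = (n:ℝ)^(-(δ/2)) := by
          rw [show (n:ℝ) * (n:ℝ)^(-β) * (n:ℝ)^(γ/2) * (n:ℝ)^(-r)
            = (n:ℝ)^(1:ℝ) * (n:ℝ)^(-β) * (n:ℝ)^(γ/2) * (n:ℝ)^(-r) by rw [Real.rpow_one],
          ← Real.rpow_add hN0, ← Real.rpow_add hN0, ← Real.rpow_add hN0]
          congr 1
          rw [hrdef, hδdef]
          ring
        have hbound : P0c^n - Pmc^n ≤ Real.sqrt 2 * (n:ℝ)^(-(δ/2)) := by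
          calc P0c^n - Pmc^n ≤ (n:ℝ) * (ε n * p1) := hbr1
            _ ≤ (n:ℝ) * ((n:ℝ)^(-β) * (Real.sqrt 2 * (t n) * (n:ℝ)^(γ/2))) := by
                rw [hεn]
                gcongr
            _ = Real.sqrt 2 * ((n:ℝ) * (n:ℝ)^(-β) * (n:ℝ)^(γ/2)) * (t n) := by ring
            _ ≤ Real.sqrt 2 * ((n:ℝ) * (n:ℝ)^(-β) * (n:ℝ)^(γ/2)) * (n:ℝ)^(-r) := by
                have : (0:ℝ) ≤ Real.sqrt 2 * ((n:ℝ) * (n:ℝ)^(-β) * (n:ℝ)^(γ/2)) := by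
                  positivity
                exact mul_le_mul_of_nonneg_left hcase this
            _ = Real.sqrt 2 * ((n:ℝ) * (n:ℝ)^(-β) * (n:ℝ)^(γ/2) * (n:ℝ)^(-r)) := by ring
            _ = Real.sqrt 2 * (n:ℝ)^(-(δ/2)) := by rw [halg]
        rw [hf_eq]
        have hexp := Real.exp_pos (-((n:ℝ)^(δ/2)/500))
        simp only [hD]
        linarith
      · -- large threshold: use the strip lower bound
        have ht0 : 0 < t n := lt_trans (by positivity) hcase
        have hrN1 : (n:ℝ)^(-r) ≤ 1 :=
          Real.rpow_le_one_of_one_le_of_nonpos hN1.le (by linarith)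
        set s : ℝ := min (Real.sqrt 2 * t n) 1 with hsdef
        have hs0 : 0 ≤ s := le_min (by positivity) zero_le_one
        have hs1 : s ≤ 1 := min_le_right _ _
        have hq0lo : s/500 ≤ q0 := by
          have hsub : {z : ℝ × ℝ | |z.1 - z.2| ≤ s}
              ⊆ {z : ℝ × ℝ | |z.1 - z.2| ≤ Real.sqrt 2 * t n} := by
            intro z hz
            simp only [mem_setOf_eq] at hz ⊢
            exact le_trans hz (min_le_left _ _)
          have hle := (strip_lower s hs0 hs1).trans (measure_mono hsub)
          rw [hq0def, biNormal_zero_Aset]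
          exact (ENNReal.ofReal_le_iff_le_toReal (measure_ne_top _ _)).mp hle
        have hsge : (n:ℝ)^(-r) ≤ s := by
          apply le_min _ hrN1
          have h1 : (1:ℝ) ≤ Real.sqrt 2 := by
            rw [show (1:ℝ) = Real.sqrt 1 by rw [Real.sqrt_one]]
            exact Real.sqrt_le_sqrt (by norm_num)
          nlinarith
        have halg2 : (n:ℝ) * (n:ℝ)^(-r) = (n:ℝ)^(δ/2) := by
          rw [show (n:ℝ) * (n:ℝ)^(-r) = (n:ℝ)^(1:ℝ) * (n:ℝ)^(-r) by rw [Real.rpow_one],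
          ← Real.rpow_add hN0]
          congr 1
          rw [hrdef]
          ring
        have hbound : P0c^n - Pmc^n ≤ Real.exp (-((n:ℝ)^(δ/2)/500)) := by
          refine hbr2.trans (Real.exp_le_exp.mpr ?_)
          rw [neg_le_neg_iff]
          calc (n:ℝ)^(δ/2)/500 = ((n:ℝ) * (n:ℝ)^(-r))/500 := by rw [halg2]
            _ = (n:ℝ) * ((n:ℝ)^(-r)/500) := by ring
            _ ≤ (n:ℝ) * (s/500) := by
                apply mul_le_mul_of_nonneg_left _ hN0.le
                linarith
            _ ≤ (n:ℝ) * q0 := by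
                apply mul_le_mul_of_nonneg_left hq0lo hN0.le
        rw [hf_eq]
        have hpos : (0:ℝ) ≤ Real.sqrt 2 * (n:ℝ)^(-(δ/2)) := by positivity
        simp only [hD]
        linarith
  -- conclude
  have hf2 : ∀ n, f n ≤ 2 := by
    intro n
    have h1 : ((iid n (biNormal 0)) (extremesReject n (t n))).toReal ≤ 1 := by
      haveI : IsProbabilityMeasure (iid n (biNormal 0)) := by
        rw [iid]; infer_instance
      exact prob_toReal_le_one _ _
    have h2 : (0:ℝ) ≤ ((iid n (mixture (ε n) (ρ n))) (extremesReject n (t n))).toReal :=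
      ENNReal.toReal_nonneg
    simp only [hf]
    linarith
  have hev : ∀ᶠ n in atTop, 1 - D n ≤ f n :=
    eventually_atTop.mpr ⟨2, main⟩
  have hu : Tendsto (fun n => 1 - D n) atTop (𝓝 1) := by
    have := hDlim.const_sub 1
    simpa using this
  have h1 : liminf (fun n => 1 - D n) atTop = 1 := hu.liminf_eq
  rw [← h1]
  exact liminf_le_liminf hev hu.isBoundedUnder_ge (isCoboundedUnder_ge_of_le _ hf2)
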